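/- If r is the nonzero Gauss remainder of nonzero a, b ∈ ℤ[i] with φ(r) ≥ φ(b) = n, then ℓ∞(b) - min(|Re b|, |Im b|) ≤ wₙ - 3·2^{v₂(b)}. -/

import Mathlib

open GaussianInt

noncomputable section

/-- The sequence w: w_{2k} = 3·2^k, w_{2k+1} = 4·2^k. -/
def w (n : ℕ) : ℤ := if n % 2 = 0 then 3 * 2 ^ (n / 2) else 4 * 2 ^ (n / 2)

/-- 2-adic valuation of gcd(Re z, Im z). -/
def v2 (z : GaussianInt) : ℕ := padicValNat 2 (Int.gcd z.re z.im)

/-- ℓ₁ norm. -/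
def l1 (z : GaussianInt) : ℤ := |z.re| + |z.im|

/-- ℓ∞ norm. -/
def linf (z : GaussianInt) : ℤ := max |z.re| |z.im|

/-- m(z) = min(|Re z|, |Im z|). -/
def mm (z : GaussianInt) : ℤ := min |z.re| |z.im|

/-- The algebraic norm. -/
def Nm (z : GaussianInt) : ℤ := z.re ^ 2 + z.im ^ 2

/-- Graves' formula for the minimal Euclidean function φ on ℤ[i]. -/
def phi (z : GaussianInt) : ℕ :=
  let j := v2 z
  let n := sInf {n : ℕ | |z.re| ≤ 2 ^ j * (w n - 2) ∧ |z.im| ≤ 2 ^ j * (w n - 2)}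
  if l1 z ≤ 2 ^ j * (w (n + 1) - 3) then n + 2 * j else n + 2 * j + 1

/-- Nearest integer, rounding halves down. -/
def nint (x : ℚ) : ℤ := if x - ⌊x⌋ ≤ 1 / 2 then ⌊x⌋ else ⌈x⌉

/-- Gauss quotient: coordinatewise nearest-integer rounding of a·conj(b)/Nm(b). -/
def gq (a b : GaussianInt) : GaussianInt :=
  ⟨nint (((a.re * b.re + a.im * b.im : ℤ) : ℚ) / ((b.re ^ 2 + b.im ^ 2 : ℤ) : ℚ)),
   nint (((a.im * b.re - a.re * b.im : ℤ) : ℚ) / ((b.re ^ 2 + b.im ^ 2 : ℤ) : ℚ))⟩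

/-- Gauss remainder. -/
def gr (a b : GaussianInt) : GaussianInt := a - gq a b * b

/-- The imaginary unit in ℤ[i]. -/
def Ii : GaussianInt := ⟨0, 1⟩

/-- The canonical unit u_z. -/
def uz (z : GaussianInt) : GaussianInt :=
  if |z.re| > |z.im| then (if 0 < z.re then 1 else -1)
  else if |z.im| > |z.re| then (if 0 < z.im then -Ii else Ii)
  else if 0 < z.re then (if 0 < z.im then 1 else Ii)
  else (if 0 < z.im then -Ii else -1)

/-- s(z) = sgn(Im(u_z·z)). -/
def sfun (z : GaussianInt) : ℤ := Int.sign ((uz z * z).im)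


-- AUX

def nfun (z : GaussianInt) : ℕ :=
  sInf {n : ℕ | |z.re| ≤ 2 ^ (v2 z) * (w n - 2) ∧ |z.im| ≤ 2 ^ (v2 z) * (w n - 2)}

lemma phi_def (z : GaussianInt) :
    phi z = if l1 z ≤ 2 ^ (v2 z) * (w (nfun z + 1) - 3) then nfun z + 2 * (v2 z)
      else nfun z + 2 * (v2 z) + 1 := rfl

lemma w_three (n : ℕ) : 3 ≤ w n := by
  unfold w
  have h : (1:ℤ) ≤ 2 ^ (n / 2) := one_le_pow₀ (by norm_num)
  split <;> nlinarith

lemma w_shift (n j : ℕ) : w (n + 2 * j) = 2 ^ j * w n := by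
  have h1 : (n + 2 * j) % 2 = n % 2 := by omega
  have h2 : (n + 2 * j) / 2 = n / 2 + j := by omega
  unfold w
  rw [h1, h2, pow_add]
  split <;> ring

lemma w_step (n : ℕ) : w n + 1 ≤ w (n + 1) := by
  have h : (1:ℤ) ≤ 2 ^ (n / 2) := one_le_pow₀ (by norm_num)
  rcases Nat.even_or_odd n with ⟨m, hm⟩ | ⟨m, hm⟩
  · subst hm
    have e1 : (m + m) % 2 = 0 := by omega
    have e2 : (m + m + 1) % 2 = 1 := by omega
    have e3 : (m + m) / 2 = m := by omega
    have e4 : (m + m + 1) / 2 = m := by omega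
    unfold w; rw [e1, e2, e3, e4]; simp
  · subst hm
    have e1 : (2 * m + 1) % 2 = 1 := by omega
    have e2 : (2 * m + 1 + 1) % 2 = 0 := by omega
    have e3 : (2 * m + 1) / 2 = m := by omega
    have e4 : (2 * m + 1 + 1) / 2 = m + 1 := by omega
    unfold w; rw [e1, e2, e3, e4]; simp [pow_succ]
    nlinarith [one_le_pow₀ (n := m) (a := (2:ℤ)) (by norm_num)]

lemma w_sq (k : ℕ) : (2:ℤ) ^ (k + 2) ≤ (w k - 1) ^ 2 := by
  have h : (1:ℤ) ≤ 2 ^ (k / 2) := one_le_pow₀ (by norm_num)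
  rcases Nat.even_or_odd k with ⟨m, hm⟩ | ⟨m, hm⟩
  · subst hm
    have e1 : (m + m) % 2 = 0 := by omega
    have e3 : (m + m) / 2 = m := by omega
    have e5 : m + m + 2 = (m + 1) * 2 := by omega
    unfold w; rw [e1, e3, e5, pow_mul, pow_succ]
    have h : (1:ℤ) ≤ 2 ^ m := one_le_pow₀ (by norm_num)
    norm_num
    have hs : (2:ℤ) ^ (m + 1) = 2 ^ m * 2 := pow_succ 2 m
    nlinarith [sq_nonneg ((2:ℤ)^m - 1)]
  · subst hm
    have e1 : (2 * m + 1) % 2 = 1 := by omega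
    have e3 : (2 * m + 1) / 2 = m := by omega
    have e5 : 2 * m + 1 + 2 = (m + 1) * 2 + 1 := by omega
    unfold w; rw [e1, e3, e5, pow_succ, pow_mul, pow_succ]
    have h : (1:ℤ) ≤ 2 ^ m := one_le_pow₀ (by norm_num)
    norm_num
    have hs : (2:ℤ) ^ (m + 1) = 2 ^ m * 2 := pow_succ 2 m
    nlinarith [sq_nonneg ((2:ℤ)^m - 1)]

lemma nint_close (x : ℚ) : |x - nint x| ≤ 1 / 2 := by
  unfold nint
  split_ifs with h
  · rw [abs_of_nonneg (by linarith [Int.floor_le x])]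
    exact h
  · push_neg at h
    have h1 : (⌈x⌉ : ℚ) ≤ ⌊x⌋ + 1 := by exact_mod_cast Int.ceil_le_floor_add_one x
    have h2 : x ≤ ⌈x⌉ := Int.le_ceil x
    rw [abs_of_nonpos (by linarith)]
    linarith

lemma ne_zero_coords {z : GaussianInt} (hz : z ≠ 0) : z.re ≠ 0 ∨ z.im ≠ 0 := by
  by_contra h
  push_neg at h
  exact hz (Zsqrtd.ext h.1 h.2)

lemma Nm_pos {z : GaussianInt} (hz : z ≠ 0) : 0 < Nm z := by
  rcases ne_zero_coords hz with h | h
  · have := sq_nonneg z.im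
    have : 0 < z.re ^ 2 := by positivity
    unfold Nm; nlinarith [sq_nonneg z.im]
  · unfold Nm; nlinarith [sq_nonneg z.re, (by positivity : 0 < z.im ^ 2)]

lemma gr_norm (a b : GaussianInt) (hb : b ≠ 0) : 2 * Nm (gr a b) ≤ Nm b := by
  set N : ℤ := b.re ^ 2 + b.im ^ 2 with hNdef
  have hNm : Nm b = N := rfl
  have hN : 0 < N := hNm ▸ Nm_pos hb
  set x : ℤ := a.re * b.re + a.im * b.im with hx
  set y : ℤ := a.im * b.re - a.re * b.im with hy
  set u : ℤ := nint (((x : ℤ) : ℚ) / ((N : ℤ) : ℚ)) with hu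
  set v : ℤ := nint (((y : ℤ) : ℚ) / ((N : ℤ) : ℚ)) with hv
  have hq : gq a b = ⟨u, v⟩ := rfl
  have key : ∀ t : ℤ, 2 * |t - nint ((t : ℚ) / (N : ℚ)) * N| ≤ N := by
    intro t
    have hNQ : ((N : ℚ)) ≠ 0 := by exact_mod_cast hN.ne'
    have h1 : |(t : ℚ) / N - nint ((t : ℚ) / N)| ≤ 1 / 2 := nint_close _
    have h2 : ((t : ℚ) - nint ((t : ℚ) / N) * N) = ((t : ℚ) / N - nint ((t : ℚ) / N)) * N := by
      field_simp
    have h3 : |(t : ℚ) - nint ((t : ℚ) / N) * N| ≤ N / 2 := by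
      rw [h2, abs_mul, abs_of_pos (by exact_mod_cast hN : (0:ℚ) < N)]
      calc |(t : ℚ) / N - nint ((t : ℚ) / N)| * N ≤ (1/2) * N :=
            mul_le_mul_of_nonneg_right h1 (by positivity)
        _ = N / 2 := by ring
    have h4 : 2 * |((t - nint ((t : ℚ) / N) * N : ℤ) : ℚ)| ≤ (N : ℚ) := by
      push_cast
      linarith [h3]
    exact_mod_cast h4
  have hX := key x
  have hY := key y
  rw [← hu] at hX
  rw [← hv] at hY
  set X : ℤ := x - u * N with hXdef
  set Y : ℤ := y - v * N with hYdef
  have hid : Nm (gr a b) * N = X ^ 2 + Y ^ 2 := by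
    have h1 : (gr a b).re = a.re - (u * b.re - v * b.im) := by
      simp [gr, hq, sub_eq_add_neg, Zsqrtd.re_mul]
    have h2 : (gr a b).im = a.im - (u * b.im + v * b.re) := by
      simp [gr, hq, sub_eq_add_neg, Zsqrtd.im_mul]
    rw [Nm, h1, h2, hXdef, hYdef, hx, hy, hNdef]
    ring
  have h4X : 4 * X ^ 2 ≤ N ^ 2 := by nlinarith [abs_nonneg X, sq_abs X]
  have h4Y : 4 * Y ^ 2 ≤ N ^ 2 := by nlinarith [abs_nonneg Y, sq_abs Y]
  have : (2 * Nm (gr a b)) * N ≤ N * N := by nlinarith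
  rw [hNm]
  exact le_of_mul_le_mul_right this hN

lemma one_le_two_pow {j : ℕ} : (1:ℤ) ≤ 2 ^ j := one_le_pow₀ (by norm_num)

lemma S_nonempty (z : GaussianInt) :
    {n : ℕ | |z.re| ≤ 2 ^ (v2 z) * (w n - 2) ∧ |z.im| ≤ 2 ^ (v2 z) * (w n - 2)}.Nonempty := by
  set K := (max |z.re| |z.im|).toNat with hK
  have hwK : w (2 * K) = 3 * 2 ^ K := by
    unfold w
    have h1 : (2 * K) % 2 = 0 := by omega
    have h2 : (2 * K) / 2 = K := by omega
    rw [h1, h2]; simp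
  have hKmax : max |z.re| |z.im| ≤ (K : ℤ) :=
    Int.self_le_toNat _
  have h2K : (K : ℤ) < 2 ^ K := by exact_mod_cast Nat.lt_two_pow_self (n := K)
  have hpow : (1:ℤ) ≤ 2 ^ K := one_le_two_pow
  have hbig : max |z.re| |z.im| ≤ w (2 * K) - 2 := by
    rw [hwK]; linarith
  have hmul : w (2 * K) - 2 ≤ 2 ^ (v2 z) * (w (2 * K) - 2) := by
    have h0 : (0:ℤ) ≤ w (2 * K) - 2 := le_trans (by linarith [abs_nonneg z.re, le_max_left |z.re| |z.im|]) hbig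
    nlinarith [one_le_two_pow (j := v2 z)]
  exact ⟨2 * K, le_trans (le_trans (le_max_left _ _) hbig) hmul,
    le_trans (le_trans (le_max_right _ _) hbig) hmul⟩

lemma nfun_mem (z : GaussianInt) :
    |z.re| ≤ 2 ^ (v2 z) * (w (nfun z) - 2) ∧ |z.im| ≤ 2 ^ (v2 z) * (w (nfun z) - 2) :=
  Nat.sInf_mem (S_nonempty z)

lemma v2_dvd (z : GaussianInt) : (2:ℤ) ^ (v2 z) ∣ z.re ∧ (2:ℤ) ^ (v2 z) ∣ z.im := by
  have h : (2:ℕ) ^ (v2 z) ∣ Int.gcd z.re z.im := pow_padicValNat_dvd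
  have h' : ((2:ℤ)) ^ (v2 z) ∣ (Int.gcd z.re z.im : ℤ) := by exact_mod_cast h
  exact ⟨h'.trans (Int.gcd_dvd_left _ _), h'.trans (Int.gcd_dvd_right _ _)⟩

lemma phi_le (z : GaussianInt) : phi z ≤ nfun z + 2 * v2 z + 1 := by
  rw [phi_def]; split <;> omega

/-- Lemma B: 2^φ(z) ≤ Nm z for z ≠ 0. -/
lemma norm_lb (z : GaussianInt) (hz : z ≠ 0) : (2:ℤ) ^ (phi z) ≤ Nm z := by
  set j := v2 z with hj
  obtain ⟨hre, him⟩ := v2_dvd z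
  obtain ⟨p, hp⟩ := hre
  obtain ⟨q, hq⟩ := him
  have hNm : Nm z = (2 ^ j) ^ 2 * (p ^ 2 + q ^ 2) := by rw [Nm, hp, hq]; ring
  have hj1 : (1:ℤ) ≤ 2 ^ j := one_le_two_pow
  rcases Nat.eq_zero_or_pos (nfun z) with hn0 | hn0
  · -- n₀ = 0
    have hp1 : z.re ≠ 0 ∨ z.im ≠ 0 := ne_zero_coords hz
    have hpq : 1 ≤ p ^ 2 + q ^ 2 := by
      rcases hp1 with h | h
      · have : p ≠ 0 := by rintro rfl; simp at hp; exact h hp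
        nlinarith [sq_nonneg q, sq_nonneg p, Int.one_le_abs this, sq_abs p]
      · have : q ≠ 0 := by rintro rfl; simp at hq; exact h hq
        nlinarith [sq_nonneg p, Int.one_le_abs this, sq_abs q]
    rw [phi_def, ← hj, hn0]
    split_ifs with hcond
    · -- φ = 2j
      rw [hNm]
      calc (2:ℤ) ^ (0 + 2 * j) = (2 ^ j) ^ 2 * 1 := by rw [zero_add, pow_mul', mul_one]
        _ ≤ (2 ^ j) ^ 2 * (p ^ 2 + q ^ 2) := by nlinarith
    · -- φ = 2j + 1 : l1 z > 2^j * (w 1 - 3) = 2^j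
      push_neg at hcond
      have hw1 : w 1 = 4 := by unfold w; norm_num
      rw [hw1] at hcond
      have hl1 : 2 ^ j * 1 < |z.re| + |z.im| := by
        have := hcond; unfold l1 at this; linarith
      have habs : |z.re| + |z.im| = 2 ^ j * (|p| + |q|) := by
        rw [hp, hq, abs_mul, abs_mul, abs_of_nonneg (by positivity : (0:ℤ) ≤ 2 ^ j)]; ring
      have h2 : 1 < |p| + |q| := by
        rw [habs] at hl1
        by_contra hcon
        push_neg at hcon
        nlinarith
      have hpq2 : 2 ≤ p ^ 2 + q ^ 2 := by
        nlinarith [sq_abs p, sq_abs q, abs_nonneg p, abs_nonneg q,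
          mul_self_nonneg (|p| - 1), mul_self_nonneg (|q| - 1)]
      rw [hNm]
      calc (2:ℤ) ^ (0 + 2 * j + 1) = (2 ^ j) ^ 2 * 2 := by rw [zero_add, pow_succ, pow_mul']
        _ ≤ (2 ^ j) ^ 2 * (p ^ 2 + q ^ 2) := by nlinarith
  · -- n₀ = k + 1
    obtain ⟨k, hk⟩ : ∃ k, nfun z = k + 1 := ⟨nfun z - 1, by omega⟩
    have hnot : k ∉ {n : ℕ | |z.re| ≤ 2 ^ (v2 z) * (w n - 2) ∧ |z.im| ≤ 2 ^ (v2 z) * (w n - 2)} :=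
      Nat.notMem_of_lt_sInf (by rw [← nfun]; omega)
    simp only [Set.mem_setOf_eq, not_and_or, not_le] at hnot
    have hwk3 : (3:ℤ) ≤ w k := w_three k
    -- the big coordinate C
    have hbig : ∃ C : ℤ, C ^ 2 ≤ Nm z ∧ (2:ℤ) ^ j ∣ C ∧ 2 ^ j * (w k - 2) < C := by
      rcases hnot with h | h
      · exact ⟨|z.re|, by rw [Nm]; nlinarith [sq_abs z.re, sq_nonneg z.im],
          (dvd_abs _ _).mpr ⟨p, hp⟩, h⟩
      · exact ⟨|z.im|, by rw [Nm]; nlinarith [sq_abs z.im, sq_nonneg z.re],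
          (dvd_abs _ _).mpr ⟨q, hq⟩, h⟩
    obtain ⟨C, hC1, ⟨c, hc⟩, hC3⟩ := hbig
    have hcge : w k - 1 ≤ c := by
      rw [hc] at hC3
      by_contra hcon
      push_neg at hcon
      nlinarith
    have hCge : 2 ^ j * (w k - 1) ≤ C := by
      rw [hc]
      exact mul_le_mul_of_nonneg_left hcge (by positivity)
    have hCsq : (2 ^ j * (w k - 1)) ^ 2 ≤ C ^ 2 := by
      have h0 : (0:ℤ) ≤ 2 ^ j * (w k - 1) := by nlinarith [one_le_two_pow (j := j), hwk3]
      exact pow_le_pow_left₀ h0 hCge 2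
    have hwsq : (2:ℤ) ^ (k + 2) ≤ (w k - 1) ^ 2 := w_sq k
    have hphile : phi z ≤ k + 2 + 2 * j := by have := phi_le z; omega
    calc (2:ℤ) ^ (phi z) ≤ 2 ^ (k + 2 + 2 * j) :=
          pow_le_pow_right₀ (by norm_num) hphile
      _ = (2 ^ j) ^ 2 * 2 ^ (k + 2) := by rw [pow_add, pow_mul']; ring
      _ ≤ (2 ^ j) ^ 2 * (w k - 1) ^ 2 := by nlinarith [one_le_two_pow (j := j)]
      _ = (2 ^ j * (w k - 1)) ^ 2 := by ring
      _ ≤ C ^ 2 := hCsq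
      _ ≤ Nm z := hC1

lemma w_even {n : ℕ} (hn : 1 ≤ n) : (2:ℤ) ∣ (w n - 2) := by
  unfold w
  rcases Nat.even_or_odd n with ⟨m, hm⟩ | ⟨m, hm⟩
  · have hm1 : 1 ≤ m := by omega
    have e1 : n % 2 = 0 := by omega
    have e3 : n / 2 = m := by omega
    rw [e1, e3]
    obtain ⟨m', rfl⟩ : ∃ m', m = m' + 1 := ⟨m - 1, by omega⟩
    rw [if_pos rfl, pow_succ]
    exact ⟨3 * 2 ^ m' - 1, by ring⟩
  · have e1 : n % 2 = 1 := by omega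
    have e3 : n / 2 = m := by omega
    rw [e1, e3]
    rw [if_neg (by norm_num)]
    exact ⟨2 * 2 ^ m - 1, by ring⟩


set_option maxHeartbeats 1000000 in
theorem stmt12 (a b r : GaussianInt) (n : ℕ) (ha : a ≠ 0) (hb : b ≠ 0) (hr : r = gr a b)
    (hr0 : r ≠ 0) (hphi : phi r ≥ phi b) (hn : phi b = n) :
    linf b - mm b ≤ w n - 3 * 2 ^ (v2 b) := by
  subst hn
  obtain ⟨hre, him⟩ := v2_dvd b
  obtain ⟨h1mem, h2mem⟩ := nfun_mem b
  rw [phi_def]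
  set j := v2 b with hj
  set n₀ := nfun b with hn₀
  clear_value j n₀
  have hj1 : (1:ℤ) ≤ 2 ^ j := one_le_two_pow
  have hM : linf b ≤ 2 ^ j * (w n₀ - 2) := max_le h1mem h2mem
  have hm0 : 0 ≤ mm b := le_min (abs_nonneg _) (abs_nonneg _)
  split_ifs with hcond
  · -- ε = 0 branch
    have hwsh : w (n₀ + 2 * j) = 2 ^ j * w n₀ := w_shift n₀ j
    by_contra hcon
    push_neg at hcon
    rw [hwsh] at hcon
    have hdM : (2:ℤ) ^ j ∣ linf b := by
      rcases le_total |b.re| |b.im| with h | h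
      · rw [linf, max_eq_right h]; exact (dvd_abs _ _).mpr him
      · rw [linf, max_eq_left h]; exact (dvd_abs _ _).mpr hre
    have hdm : (2:ℤ) ^ j ∣ mm b := by
      rcases le_total |b.re| |b.im| with h | h
      · rw [mm, min_eq_left h]; exact (dvd_abs _ _).mpr hre
      · rw [mm, min_eq_right h]; exact (dvd_abs _ _).mpr him
    obtain ⟨c, hc⟩ : (2:ℤ) ^ j ∣ (linf b - mm b) := dvd_sub hdM hdm
    have h2jpos : (0:ℤ) < 2 ^ j := by positivity
    have hcle : c ≤ w n₀ - 2 := by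
      have h1 : 2 ^ j * c ≤ 2 ^ j * (w n₀ - 2) := by rw [← hc]; linarith
      exact le_of_mul_le_mul_left h1 h2jpos
    have hcgt : w n₀ - 3 < c := by
      have h1 : 2 ^ j * (w n₀ - 3) < 2 ^ j * c := by rw [← hc]; linarith
      exact lt_of_mul_lt_mul_left h1 (le_of_lt h2jpos)
    have hceq : c = w n₀ - 2 := by omega
    have hMm : linf b - mm b = 2 ^ j * (w n₀ - 2) := by rw [hc, hceq]
    have hmm0 : mm b = 0 := le_antisymm (by linarith) hm0
    have hMeq : linf b = 2 ^ j * (w n₀ - 2) := by linarith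
    -- identify gcd
    have hg : (Int.gcd b.re b.im : ℤ) = linf b := by
      rcases le_total |b.re| |b.im| with h | h
      · have hre0 : b.re = 0 := by
          have h0 : |b.re| = 0 := by rw [mm, min_eq_left h] at hmm0; exact hmm0
          exact abs_eq_zero.mp h0
        rw [linf, max_eq_right h, hre0]
        simp [Int.gcd, Int.natCast_natAbs]
      · have him0 : b.im = 0 := by
          have h0 : |b.im| = 0 := by rw [mm, min_eq_right h] at hmm0; exact hmm0
          exact abs_eq_zero.mp h0
        rw [linf, max_eq_left h, him0]
        simp [Int.gcd, Int.natCast_natAbs]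
    have hgne : Int.gcd b.re b.im ≠ 0 := by
      rw [Ne, Int.gcd_eq_zero_iff]
      rintro ⟨h1, h2⟩
      exact hb (Zsqrtd.ext h1 h2)
    have hnd : ¬ (2:ℕ) ^ (j + 1) ∣ Int.gcd b.re b.im := by
      rw [hj, v2]
      exact pow_succ_padicValNat_not_dvd hgne
    have hn₀0 : n₀ = 0 := by
      by_contra hne
      obtain ⟨d, hd⟩ : (2:ℤ) ∣ (w n₀ - 2) := w_even (by omega)
      apply hnd
      have hdvd : ((2:ℕ) ^ (j + 1) : ℤ) ∣ (Int.gcd b.re b.im : ℤ) := by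
        rw [hg, hMeq, hd]
        push_cast
        exact ⟨d, by ring⟩
      exact_mod_cast hdvd
    have hw0 : w 0 = 3 := by unfold w; norm_num
    rw [hn₀0, hw0] at hMeq
    norm_num at hMeq
    -- Nm b = (2^j)^2
    have hNmb : Nm b = (2 ^ j) ^ 2 := by
      rcases le_total |b.re| |b.im| with h | h
      · have hre0 : b.re = 0 := by
          have h0 : |b.re| = 0 := by rw [mm, min_eq_left h] at hmm0; exact hmm0
          exact abs_eq_zero.mp h0
        have him' : |b.im| = 2 ^ j := by rw [linf, max_eq_right h] at hMeq; exact hMeq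
        rw [Nm, hre0]
        nlinarith [sq_abs b.im]
      · have him0 : b.im = 0 := by
          have h0 : |b.im| = 0 := by rw [mm, min_eq_right h] at hmm0; exact hmm0
          exact abs_eq_zero.mp h0
        have hre' : |b.re| = 2 ^ j := by rw [linf, max_eq_left h] at hMeq; exact hMeq
        rw [Nm, him0]
        nlinarith [sq_abs b.re]
    have hphib : phi b = 2 * j := by
      rw [phi_def, ← hj, ← hn₀, if_pos hcond, hn₀0]
      omega
    have hA : 2 * Nm r ≤ Nm b := by
      have := gr_norm a b hb
      rw [← hr] at this
      exact this
    have hB : (2:ℤ) ^ (phi r) ≤ Nm r := norm_lb r hr0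
    have hphir : 2 * j ≤ phi r := by rw [← hphib]; exact hphi
    have hpow : (2:ℤ) ^ (2 * j) ≤ Nm r :=
      le_trans (pow_le_pow_right₀ (by norm_num) hphir) hB
    have heq : (2:ℤ) ^ (2 * j) = (2 ^ j) ^ 2 := pow_mul' 2 2 j
    nlinarith [hj1]
  · -- ε = 1 branch
    have hsh : n₀ + 2 * j + 1 = (n₀ + 1) + 2 * j := by omega
    rw [hsh, w_shift]
    have hstep := w_step n₀
    have key : 2 ^ j * (w n₀ - 2) ≤ 2 ^ j * (w (n₀ + 1) - 3) :=
      mul_le_mul_of_nonneg_left (by linarith) (by positivity)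
    nlinarith
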